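/- Let k be an even nonnegative integer and let (N, ν) be a measure space with ν a finite measure. For each even j with 0 ≤ j ≤ k let v_j : N → ℝ be a bounded measurable function. Let ε₀ > 0, C > 0, c₀ > 0; for each even i with 0 ≤ i ≤ k+1 let b_i : N → ℝ be bounded measurable with b_0(x) ≥ c₀ for all x, and let b : N × (0, ε₀) → (0, ∞) be measurable satisfying |b(x,ε) − Σ_{i even, 0 ≤ i ≤ k+1} b_i(x) ε^i| ≤ C ε^{k+2} for all (x, ε). Define D(ε) = ∫_N ( ∫_ε^{ε·b(x,ε)} Σ_{j even, 0 ≤ j ≤ k} v_j(x) r^{j−k−1} dr ) dν(x), where the inner integral is the signed integral over the interval from ε to ε·b(x,ε). Then there exist real numbers a_2, a_4, …, a_k (one for each even m with 2 ≤ m ≤ k) and c ∈ ℝ such that D(ε) − Σ_{m even, 2 ≤ m ≤ k} a_m ε^{−m} → c as ε → 0⁺. In particular, D(ε) contains no log(1/ε) term as ε → 0⁺. -/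

import Mathlib

open MeasureTheory Filter Set Finset

lemma conv_aux (A B : ℕ → ℝ) (n : ℕ) (hA : ∀ i, n ≤ i → A i = 0) (hB : ∀ i, n ≤ i → B i = 0)
    (u : ℝ) :
    (∑ i ∈ range n, A i * u ^ i) * (∑ j ∈ range n, B j * u ^ j)
      = ∑ s ∈ range (2 * n), (∑ t ∈ range (s + 1), A t * B (s - t)) * u ^ s := by
  rw [Finset.sum_mul_sum]
  calc ∑ i ∈ range n, ∑ j ∈ range n, A i * u ^ i * (B j * u ^ j)
      = ∑ i ∈ range n, ∑ j ∈ range n, A i * B j * u ^ (i + j) :=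
        Finset.sum_congr rfl fun i _ => Finset.sum_congr rfl fun j _ => by rw [pow_add]; ring
    _ = ∑ p ∈ (range n).sigma (fun _ => range n), A p.1 * B p.2 * u ^ (p.1 + p.2) :=
        Finset.sum_sigma' _ _ _
    _ = ∑ p ∈ ((range (2*n)).sigma (fun s => range (s+1))).filter
          (fun p => p.2 < n ∧ p.1 - p.2 < n), A p.2 * B (p.1 - p.2) * u ^ p.1 := by
        apply Finset.sum_nbij' (fun p => ⟨p.1 + p.2, p.1⟩) (fun p => ⟨p.2, p.1 - p.2⟩)
        · rintro ⟨i, j⟩ hp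
          simp only [Finset.mem_sigma, Finset.mem_range] at hp
          simp only [Finset.mem_filter, Finset.mem_sigma, Finset.mem_range]
          omega
        · rintro ⟨s, t⟩ hp
          simp only [Finset.mem_filter, Finset.mem_sigma, Finset.mem_range] at hp
          simp only [Finset.mem_sigma, Finset.mem_range]
          omega
        · rintro ⟨i, j⟩ hp; simp only [Finset.mem_sigma, Finset.mem_range] at hp
          simp only
          have h : i + j - i = j := by omega
          rw [h]
        · rintro ⟨s, t⟩ hp
          simp only [Finset.mem_filter, Finset.mem_sigma, Finset.mem_range] at hp
          simp only
          have h : t + (s - t) = s := by omega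
          rw [h]
        · rintro ⟨i, j⟩ hp; simp only [Finset.mem_sigma, Finset.mem_range] at hp
          simp only
          have h : i + j - i = j := by omega
          rw [h]
    _ = ∑ p ∈ (range (2*n)).sigma (fun s => range (s+1)), A p.2 * B (p.1 - p.2) * u ^ p.1 := by
        apply Finset.sum_filter_of_ne
        intro p hp hne
        by_contra hcon
        push_neg at hcon
        rcases Nat.lt_or_ge p.2 n with h1 | h1
        · exact hne (by rw [hB _ (hcon h1)]; ring)
        · exact hne (by rw [hA _ h1]; ring)
    _ = ∑ s ∈ range (2*n), ∑ t ∈ range (s+1), A t * B (s - t) * u ^ s := by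
        rw [Finset.sum_sigma]
    _ = ∑ s ∈ range (2 * n), (∑ t ∈ range (s + 1), A t * B (s - t)) * u ^ s :=
        Finset.sum_congr rfl fun s _ => (Finset.sum_mul _ _ _).symm

section
variable {N : Type*} [MeasurableSpace N]

/-- Even-power expansion to order `2K+2` on a right neighborhood of 0, uniformly in `x`. -/
def ExpOK (K : ℕ) (f : N → ℝ → ℝ) : Prop :=
  ∃ (e : ℕ → N → ℝ) (ε₁ Cf Mf : ℝ), 0 < ε₁ ∧ ε₁ ≤ 1 ∧ 0 ≤ Cf ∧ 0 ≤ Mf ∧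
    (∀ t, Measurable (e t)) ∧ (∀ t x, |e t x| ≤ Mf) ∧
    ∀ x, ∀ ε ∈ Ioo (0:ℝ) ε₁,
      |f x ε - ∑ t ∈ range (K+1), e t x * ε ^ (2*t)| ≤ Cf * ε ^ (2*K+2)

lemma sum_pow_bound (e : ℕ → ℝ) (M : ℝ) (hM : ∀ t, |e t| ≤ M) (n : ℕ) (ε : ℝ)
    (h0 : 0 ≤ ε) (h1 : ε ≤ 1) : |∑ t ∈ range n, e t * ε ^ (2*t)| ≤ n * M := by
  calc |∑ t ∈ range n, e t * ε ^ (2*t)| ≤ ∑ t ∈ range n, |e t * ε ^ (2*t)| :=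
        Finset.abs_sum_le_sum_abs _ _
    _ ≤ ∑ t ∈ range n, M := by
        apply Finset.sum_le_sum
        intro t _
        rw [abs_mul, abs_pow, abs_of_nonneg h0]
        calc |e t| * ε ^ (2*t) ≤ M * 1 := by
              apply mul_le_mul (hM t) (pow_le_one₀ h0 h1) (pow_nonneg h0 _)
                ((abs_nonneg _).trans (hM t))
          _ = M := mul_one M
    _ = n * M := by rw [Finset.sum_const, card_range, nsmul_eq_mul]

lemma expOK_const (K : ℕ) (w : N → ℝ) (hw : Measurable w) (M : ℝ) (hM : ∀ x, |w x| ≤ M) :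
    ExpOK K (fun x _ => w x) := by
  refine ⟨fun t x => if t = 0 then w x else 0, 1, 0, max M 0, one_pos, le_refl 1, le_refl 0,
    le_max_right _ _, ?_, ?_, ?_⟩
  · intro t; by_cases h : t = 0 <;> simp [h, hw, measurable_const]
  · intro t x
    simp only
    by_cases h : t = 0
    · rw [if_pos h]; exact (hM x).trans (le_max_left _ _)
    · rw [if_neg h, abs_zero]; exact le_max_right M 0
  · intro x ε hε
    have : ∑ t ∈ range (K+1), (if t = 0 then w x else 0) * ε ^ (2*t) = w x := by
      rw [Finset.sum_eq_single 0]
      · simp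
      · intro t _ ht; simp [ht]
      · simp
    simp [this]

lemma ExpOK.add {K : ℕ} {f g : N → ℝ → ℝ} (hf : ExpOK K f) (hg : ExpOK K g) :
    ExpOK K (fun x ε => f x ε + g x ε) := by
  obtain ⟨e, ε₁, Cf, Mf, hε₁, hε₁1, hCf, hMf, hmeas, hbd, hexp⟩ := hf
  obtain ⟨e', ε₂, Cg, Mg, hε₂, hε₂1, hCg, hMg, hmeas', hbd', hexp'⟩ := hg
  refine ⟨fun t x => e t x + e' t x, min ε₁ ε₂, Cf + Cg, Mf + Mg, lt_min hε₁ hε₂,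
    (min_le_left _ _).trans hε₁1, by positivity, by positivity,
    fun t => (hmeas t).add (hmeas' t), fun t x => (abs_add_le _ _).trans (add_le_add (hbd t x) (hbd' t x)), ?_⟩
  intro x ε hε
  have h1 := hexp x ε ⟨hε.1, hε.2.trans_le (min_le_left _ _)⟩
  have h2 := hexp' x ε ⟨hε.1, hε.2.trans_le (min_le_right _ _)⟩
  have hsum : ∑ t ∈ range (K+1), (e t x + e' t x) * ε ^ (2*t)
      = (∑ t ∈ range (K+1), e t x * ε ^ (2*t)) + ∑ t ∈ range (K+1), e' t x * ε ^ (2*t) := by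
    rw [← Finset.sum_add_distrib]; exact Finset.sum_congr rfl fun t _ => by ring
  calc |f x ε + g x ε - ∑ t ∈ range (K+1), (e t x + e' t x) * ε ^ (2*t)|
      = |(f x ε - ∑ t ∈ range (K+1), e t x * ε ^ (2*t))
          + (g x ε - ∑ t ∈ range (K+1), e' t x * ε ^ (2*t))| := by rw [hsum]; congr 1; ring
    _ ≤ _ + _ := abs_add_le _ _
    _ ≤ Cf * ε ^ (2*K+2) + Cg * ε ^ (2*K+2) := add_le_add h1 h2
    _ = (Cf + Cg) * ε ^ (2*K+2) := by ring

end

section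
variable {N : Type*} [MeasurableSpace N]

lemma ExpOK.mul {K : ℕ} {f g : N → ℝ → ℝ} (hf : ExpOK K f) (hg : ExpOK K g) :
    ExpOK K (fun x ε => f x ε * g x ε) := by
  obtain ⟨e, ε₁, Cf, Mf, hε₁, hε₁1, hCf, hMf, hmeas, hbd, hexp⟩ := hf
  obtain ⟨e', ε₂, Cg, Mg, hε₂, hε₂1, hCg, hMg, hmeas', hbd', hexp'⟩ := hg
  set E : ℕ → N → ℝ := fun t => if t < K+1 then e t else fun _ => 0 with hE
  set E' : ℕ → N → ℝ := fun t => if t < K+1 then e' t else fun _ => 0 with hE'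
  have hEbd : ∀ t x, |E t x| ≤ Mf := by
    intro t x; simp only [hE]; split
    · exact hbd t x
    · simpa using hMf
  have hE'bd : ∀ t x, |E' t x| ≤ Mg := by
    intro t x; simp only [hE']; split
    · exact hbd' t x
    · simpa using hMg
  have hEmeas : ∀ t, Measurable (E t) := by
    intro t; simp only [hE]; split; exacts [hmeas t, measurable_const]
  have hE'meas : ∀ t, Measurable (E' t) := by
    intro t; simp only [hE']; split; exacts [hmeas' t, measurable_const]
  have hE0 : ∀ x t, K+1 ≤ t → E t x = 0 := by
    intro x t ht; simp only [hE]; rw [if_neg (by omega)]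
  have hE'0 : ∀ x t, K+1 ≤ t → E' t x = 0 := by
    intro x t ht; simp only [hE']; rw [if_neg (by omega)]
  set c : ℕ → N → ℝ := fun s x => ∑ t ∈ range (s+1), E t x * E' (s-t) x with hc
  have hcbd : ∀ s x, |c s x| ≤ (s+1) * (Mf*Mg) := by
    intro s x
    calc |c s x| ≤ ∑ t ∈ range (s+1), |E t x * E' (s-t) x| := Finset.abs_sum_le_sum_abs _ _
      _ ≤ ∑ t ∈ range (s+1), Mf * Mg := by
          refine Finset.sum_le_sum fun t _ => ?_
          rw [abs_mul]
          exact mul_le_mul (hEbd t x) (hE'bd _ x) (abs_nonneg _) hMf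
      _ = (s+1) * (Mf*Mg) := by rw [Finset.sum_const, card_range, nsmul_eq_mul]; push_cast; ring
  refine ⟨fun s x => if s < K+1 then c s x else 0, min ε₁ ε₂,
    ((K+1)*Mf + Cf)*Cg + ((K+1)*Mg)*Cf + (K+1)*((2*K+2)*(Mf*Mg)), (K+1)*(Mf*Mg),
    lt_min hε₁ hε₂, (min_le_left _ _).trans hε₁1, by positivity, by positivity, ?_, ?_, ?_⟩
  · intro s
    by_cases h : s < K+1
    · simpa [h] using Finset.measurable_sum (range (s+1)) (fun t (_ : t ∈ range (s+1)) => (hEmeas t).mul (hE'meas (s-t)))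
    · simp [h]
  · intro s x; simp only; split
    · rename_i h
      refine (hcbd s x).trans ?_
      have : (s:ℝ)+1 ≤ (K:ℝ)+1 := by exact_mod_cast Nat.succ_le_succ (by omega)
      nlinarith [mul_nonneg hMf hMg]
    · simpa using by positivity
  · intro x ε hε
    have h0 : (0:ℝ) ≤ ε := le_of_lt hε.1
    have h1 : ε ≤ 1 := (le_of_lt hε.2).trans ((min_le_left _ _).trans hε₁1)
    have hεp : ε ^ (2*K+2) ≤ 1 := pow_le_one₀ h0 h1
    set Qf := ∑ t ∈ range (K+1), e t x * ε ^ (2*t) with hQf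
    set Qg := ∑ t ∈ range (K+1), e' t x * ε ^ (2*t) with hQg
    have hf1 : |f x ε - Qf| ≤ Cf * ε ^ (2*K+2) := hexp x ε ⟨hε.1, hε.2.trans_le (min_le_left _ _)⟩
    have hg1 : |g x ε - Qg| ≤ Cg * ε ^ (2*K+2) := hexp' x ε ⟨hε.1, hε.2.trans_le (min_le_right _ _)⟩
    have hQfb : |Qf| ≤ (K+1) * Mf := by
      have := sum_pow_bound (fun t => e t x) Mf (fun t => hbd t x) (K+1) ε h0 h1
      simpa using this
    have hQgb : |Qg| ≤ (K+1) * Mg := by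
      have := sum_pow_bound (fun t => e' t x) Mg (fun t => hbd' t x) (K+1) ε h0 h1
      simpa using this
    have hfb : |f x ε| ≤ (K+1)*Mf + Cf := by
      calc |f x ε| = |(f x ε - Qf) + Qf| := by ring_nf
        _ ≤ |f x ε - Qf| + |Qf| := abs_add_le _ _
        _ ≤ Cf * ε ^ (2*K+2) + (K+1)*Mf := add_le_add hf1 hQfb
        _ ≤ Cf * 1 + (K+1)*Mf := by nlinarith
        _ = (K+1)*Mf + Cf := by ring
    have hQfE : Qf = ∑ t ∈ range (K+1), E t x * (ε^2) ^ t := by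
      refine Finset.sum_congr rfl fun t ht => ?_
      rw [Finset.mem_range] at ht
      simp only [hE]; rw [if_pos ht, ← pow_mul]
    have hQgE : Qg = ∑ t ∈ range (K+1), E' t x * (ε^2) ^ t := by
      refine Finset.sum_congr rfl fun t ht => ?_
      rw [Finset.mem_range] at ht
      simp only [hE']; rw [if_pos ht, ← pow_mul]
    have key : Qf * Qg = ∑ s ∈ range (2*(K+1)), c s x * (ε^2) ^ s := by
      rw [hQfE, hQgE]
      exact conv_aux (fun t => E t x) (fun t => E' t x) (K+1) (fun i hi => hE0 x i hi)
        (fun i hi => hE'0 x i hi) (ε^2)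
    have hS : ∑ s ∈ range (K+1), (if s < K+1 then c s x else 0) * ε ^ (2*s)
        = ∑ s ∈ range (K+1), c s x * (ε^2) ^ s := by
      refine Finset.sum_congr rfl fun s hs => ?_
      rw [Finset.mem_range] at hs
      rw [if_pos hs, ← pow_mul]
    have tail : |Qf * Qg - ∑ s ∈ range (K+1), c s x * (ε^2) ^ s|
        ≤ (K+1)*((2*K+2)*(Mf*Mg)) * ε ^ (2*K+2) := by
      rw [key]
      have hsub : ∑ s ∈ range (2*(K+1)), c s x * (ε^2) ^ s
          - ∑ s ∈ range (K+1), c s x * (ε^2) ^ s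
          = ∑ s ∈ Finset.Ico (K+1) (2*(K+1)), c s x * (ε^2) ^ s := by
        rw [Finset.sum_Ico_eq_sub _ (by omega)]
      rw [hsub]
      calc |∑ s ∈ Finset.Ico (K+1) (2*(K+1)), c s x * (ε^2) ^ s|
          ≤ ∑ s ∈ Finset.Ico (K+1) (2*(K+1)), |c s x * (ε^2) ^ s| := Finset.abs_sum_le_sum_abs _ _
        _ ≤ ∑ s ∈ Finset.Ico (K+1) (2*(K+1)), (2*K+2)*(Mf*Mg) * ε ^ (2*K+2) := by
            refine Finset.sum_le_sum fun s hs => ?_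
            rw [Finset.mem_Ico] at hs
            rw [abs_mul, abs_pow, abs_of_nonneg (sq_nonneg ε), ← pow_mul]
            have h2 : ε ^ (2*s) ≤ ε ^ (2*K+2) := pow_le_pow_of_le_one h0 h1 (by omega)
            have h3 : |c s x| ≤ (2*K+2)*(Mf*Mg) := by
              refine (hcbd s x).trans ?_
              have : (s:ℝ) + 1 ≤ 2*(K:ℝ)+2 := by
                have : s + 1 ≤ 2*K+2 := by omega
                exact_mod_cast this
              nlinarith [mul_nonneg hMf hMg]
            exact mul_le_mul h3 h2 (pow_nonneg h0 _) (by positivity)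
        _ = (K+1)*((2*K+2)*(Mf*Mg)) * ε ^ (2*K+2) := by
            rw [Finset.sum_const, Nat.card_Ico, nsmul_eq_mul]
            have : 2*(K+1) - (K+1) = K+1 := by omega
            rw [this]; push_cast; ring
    calc |f x ε * g x ε - ∑ s ∈ range (K+1), (if s < K+1 then c s x else 0) * ε ^ (2*s)|
        = |f x ε * (g x ε - Qg) + Qg * (f x ε - Qf)
            + (Qf * Qg - ∑ s ∈ range (K+1), c s x * (ε^2) ^ s)| := by rw [hS]; congr 1; ring
      _ ≤ |f x ε * (g x ε - Qg) + Qg * (f x ε - Qf)|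
            + |Qf * Qg - ∑ s ∈ range (K+1), c s x * (ε^2) ^ s| := abs_add_le _ _
      _ ≤ (|f x ε * (g x ε - Qg)| + |Qg * (f x ε - Qf)|)
            + (K+1)*((2*K+2)*(Mf*Mg)) * ε ^ (2*K+2) := add_le_add (abs_add_le _ _) tail
      _ ≤ (((K+1)*Mf + Cf) * (Cg * ε ^ (2*K+2)) + ((K+1)*Mg) * (Cf * ε ^ (2*K+2)))
            + (K+1)*((2*K+2)*(Mf*Mg)) * ε ^ (2*K+2) := by
          refine add_le_add (add_le_add ?_ ?_) le_rfl
          · rw [abs_mul]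
            exact mul_le_mul hfb hg1 (abs_nonneg _) (by positivity)
          · rw [abs_mul]
            exact mul_le_mul hQgb hf1 (abs_nonneg _) (by positivity)
      _ = (((K+1)*Mf + Cf)*Cg + ((K+1)*Mg)*Cf + (K+1)*((2*K+2)*(Mf*Mg))) * ε ^ (2*K+2) := by
          ring

end

section
variable {N : Type*} [MeasurableSpace N]

lemma ExpOK.congr {K : ℕ} {f g : N → ℝ → ℝ} (hf : ExpOK K f) (ε₂ : ℝ) (hε₂ : 0 < ε₂)
    (hfg : ∀ x, ∀ ε ∈ Ioo (0:ℝ) ε₂, f x ε = g x ε) : ExpOK K g := by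
  obtain ⟨e, ε₁, Cf, Mf, h1, h2, h3, h4, h5, h6, h7⟩ := hf
  exact ⟨e, min ε₁ ε₂, Cf, Mf, lt_min h1 hε₂, (min_le_left _ _).trans h2, h3, h4, h5, h6,
    fun x ε hε => by
      rw [← hfg x ε ⟨hε.1, hε.2.trans_le (min_le_right _ _)⟩]
      exact h7 x ε ⟨hε.1, hε.2.trans_le (min_le_left _ _)⟩⟩

lemma ExpOK.perturb {K : ℕ} {f g : N → ℝ → ℝ} (hf : ExpOK K f) (ε₅ Cr : ℝ) (hε₅ : 0 < ε₅)
    (hCr : 0 ≤ Cr) (hd : ∀ x, ∀ ε ∈ Ioo (0:ℝ) ε₅, |g x ε - f x ε| ≤ Cr * ε ^ (2*K+2)) :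
    ExpOK K g := by
  obtain ⟨e, ε₁, Cf, Mf, h1, h2, h3, h4, h5, h6, h7⟩ := hf
  refine ⟨e, min ε₁ ε₅, Cf + Cr, Mf, lt_min h1 hε₅, (min_le_left _ _).trans h2,
    by positivity, h4, h5, h6, fun x ε hε => ?_⟩
  have hε1 : ε ∈ Ioo (0:ℝ) ε₁ := ⟨hε.1, hε.2.trans_le (min_le_left _ _)⟩
  have hε5 : ε ∈ Ioo (0:ℝ) ε₅ := ⟨hε.1, hε.2.trans_le (min_le_right _ _)⟩
  calc |g x ε - ∑ t ∈ range (K+1), e t x * ε ^ (2*t)|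
      = |(g x ε - f x ε) + (f x ε - ∑ t ∈ range (K+1), e t x * ε ^ (2*t))| := by congr 1; ring
    _ ≤ |g x ε - f x ε| + |f x ε - ∑ t ∈ range (K+1), e t x * ε ^ (2*t)| := abs_add_le _ _
    _ ≤ Cr * ε ^ (2*K+2) + Cf * ε ^ (2*K+2) := add_le_add (hd x ε hε5) (h7 x ε hε1)
    _ = (Cf + Cr) * ε ^ (2*K+2) := by ring

lemma ExpOK.pow {K : ℕ} {f : N → ℝ → ℝ} (hf : ExpOK K f) (n : ℕ) :
    ExpOK K (fun x ε => f x ε ^ n) := by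
  induction n with
  | zero =>
      exact (expOK_const K (fun _ => (1:ℝ)) measurable_const 1 (by norm_num)).congr 1 one_pos
        (fun x ε _ => by norm_num)
  | succ n ih =>
      exact (ih.mul hf).congr 1 one_pos (fun x ε _ => (pow_succ (f x ε) n).symm)

lemma ExpOK.smul {K : ℕ} {f : N → ℝ → ℝ} (hf : ExpOK K f) (w : N → ℝ) (hw : Measurable w)
    (M : ℝ) (hM : ∀ x, |w x| ≤ M) : ExpOK K (fun x ε => w x * f x ε) :=
  (expOK_const K w hw M hM).mul hf

lemma ExpOK.neg {K : ℕ} {f : N → ℝ → ℝ} (hf : ExpOK K f) :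
    ExpOK K (fun x ε => - f x ε) :=
  (hf.smul (fun _ => (-1:ℝ)) measurable_const 1 (by norm_num)).congr 1 one_pos
    (fun x ε _ => by ring)

lemma ExpOK.sub {K : ℕ} {f g : N → ℝ → ℝ} (hf : ExpOK K f) (hg : ExpOK K g) :
    ExpOK K (fun x ε => f x ε - g x ε) :=
  (hf.add hg.neg).congr 1 one_pos (fun x ε _ => by ring)

lemma expOK_zero (K : ℕ) : ExpOK K (fun (_ : N) (_ : ℝ) => (0:ℝ)) :=
  expOK_const K (fun _ => 0) measurable_const 0 (by norm_num)

lemma expOK_sum {K : ℕ} {ι : Type*} (s : Finset ι) (F : ι → N → ℝ → ℝ)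
    (h : ∀ i ∈ s, ExpOK K (F i)) : ExpOK K (fun x ε => ∑ i ∈ s, F i x ε) := by
  classical
  induction s using Finset.cons_induction with
  | empty => simpa using expOK_zero K
  | cons a s ha ih =>
      have heq : (fun x ε => ∑ i ∈ Finset.cons a s ha, F i x ε)
          = fun x ε => F a x ε + ∑ i ∈ s, F i x ε := by
        funext x ε; rw [Finset.sum_cons]
      rw [heq]
      exact (h a (Finset.mem_cons_self _ _)).add (ih fun i hi => h i (Finset.mem_cons_of_mem hi))

/-- Uniform bound from an expansion. -/
lemma ExpOK.bound {K : ℕ} {f : N → ℝ → ℝ} (hf : ExpOK K f) :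
    ∃ ε₂ M : ℝ, 0 < ε₂ ∧ ε₂ ≤ 1 ∧ 0 ≤ M ∧ ∀ x, ∀ ε ∈ Ioo (0:ℝ) ε₂, |f x ε| ≤ M := by
  obtain ⟨e, ε₁, Cf, Mf, h1, h2, h3, h4, h5, h6, h7⟩ := hf
  refine ⟨ε₁, (K+1) * Mf + Cf, h1, h2, by positivity, fun x ε hε => ?_⟩
  have h0 : (0:ℝ) ≤ ε := le_of_lt hε.1
  have h1' : ε ≤ 1 := (le_of_lt hε.2).trans h2
  calc |f x ε| = |(f x ε - ∑ t ∈ range (K+1), e t x * ε ^ (2*t))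
        + ∑ t ∈ range (K+1), e t x * ε ^ (2*t)| := by congr 1; ring
    _ ≤ |f x ε - ∑ t ∈ range (K+1), e t x * ε ^ (2*t)|
        + |∑ t ∈ range (K+1), e t x * ε ^ (2*t)| := abs_add_le _ _
    _ ≤ Cf * ε ^ (2*K+2) + (K+1) * Mf := by
        refine add_le_add (h7 x ε hε) ?_
        simpa using sum_pow_bound (fun t => e t x) Mf (fun t => h6 t x) (K+1) ε h0 h1'
    _ ≤ (K+1) * Mf + Cf := by nlinarith [pow_le_one₀ h0 h1' (n := 2*K+2)]

/-- Tail estimate: an even expansion polynomial is within `O(ε²)` of its constant term. -/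
lemma tail_small (e : ℕ → ℝ) (M : ℝ) (hM : ∀ t, |e t| ≤ M) (n : ℕ) (ε : ℝ)
    (h0 : 0 ≤ ε) (h1 : ε ≤ 1) :
    |∑ t ∈ range (n+1), e t * ε ^ (2*t) - e 0| ≤ n * M * ε ^ 2 := by
  have hs : ∑ t ∈ range (n+1), e t * ε ^ (2*t)
      = (∑ t ∈ range n, e (t+1) * ε ^ (2*(t+1))) + e 0 := by
    rw [Finset.sum_range_succ' (fun t => e t * ε ^ (2*t)) n]
    norm_num
  rw [hs, add_sub_cancel_right]
  calc |∑ t ∈ range n, e (t+1) * ε ^ (2*(t+1))|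
      ≤ ∑ t ∈ range n, |e (t+1) * ε ^ (2*(t+1))| := Finset.abs_sum_le_sum_abs _ _
    _ ≤ ∑ t ∈ range n, M * ε ^ 2 := by
        refine Finset.sum_le_sum fun t _ => ?_
        rw [abs_mul, abs_pow, abs_of_nonneg h0]
        have he : ε ^ (2*(t+1)) ≤ ε ^ 2 := pow_le_pow_of_le_one h0 h1 (by omega)
        exact mul_le_mul (hM _) he (pow_nonneg h0 _) ((abs_nonneg _).trans (hM 0))
    _ = n * M * ε ^ 2 := by rw [Finset.sum_const, card_range, nsmul_eq_mul]; ring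

/-- Reindexing even sums. -/
lemma sum_even_range (g : ℕ → ℝ) (n : ℕ) :
    ∑ i ∈ range (2*n), (if Even i then g i else 0) = ∑ t ∈ range n, g (2*t) := by
  induction n with
  | zero => simp
  | succ n ih =>
      have h2 : 2*(n+1) = (2*n + 1) + 1 := by ring
      rw [h2, Finset.sum_range_succ, Finset.sum_range_succ, ih, Finset.sum_range_succ]
      have hodd : ¬ Even (2*n+1) := by simp [Nat.even_add_one, Nat.even_iff, Nat.mul_mod_right]
      rw [if_neg hodd, if_pos (even_two_mul n)]
      ring

end

lemma geom_id (A B : ℝ) (hA : A ≠ 0) (hB : B ≠ 0) (n : ℕ) :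
    B⁻¹ - ∑ s ∈ range n, (A⁻¹)^(s+1) * (A - B)^s = (A - B)^n * (A⁻¹)^n * B⁻¹ := by
  induction n with
  | zero => simp
  | succ n ih =>
      rw [Finset.sum_range_succ, ← sub_sub, ih]
      field_simp
      have h : A * (1 / A) = 1 := by rw [mul_one_div_cancel hA]
      linear_combination (-((A - B)^n * (1 / A)^n)) * h

section
variable {N : Type*} [MeasurableSpace N]

lemma b_package
    (k K : ℕ) (hkK : k = 2*K)
    (ε₀ C c₀ : ℝ) (hε₀ : 0 < ε₀) (hC : 0 < C) (hc₀ : 0 < c₀)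
    (bc : ℕ → N → ℝ)
    (hbc_meas : ∀ i, Even i → i ≤ k + 1 → Measurable (bc i))
    (hbc_bdd : ∀ i, Even i → i ≤ k + 1 → ∃ M : ℝ, ∀ x, |bc i x| ≤ M)
    (hb0 : ∀ x, c₀ ≤ bc 0 x)
    (b : N → ℝ → ℝ)
    (hb_approx : ∀ x, ∀ ε ∈ Ioo (0 : ℝ) ε₀,
      |b x ε - ∑ i ∈ Finset.range (k + 2), (if Even i then bc i x * ε ^ i else 0)|
        ≤ C * ε ^ (k + 2)) :
    ∃ (εb Mb : ℝ), 0 < εb ∧ εb ≤ ε₀ ∧ εb ≤ 1 ∧ 0 < Mb ∧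
      (∀ x, ∀ ε ∈ Ioo (0:ℝ) εb, c₀/2 ≤ b x ε ∧ b x ε ≤ Mb) ∧
      (∀ x, Tendsto (fun ε => b x ε) (nhdsWithin 0 (Ioi 0)) (nhds (bc 0 x))) ∧
      ExpOK K b ∧ ExpOK K (fun x ε => (b x ε)⁻¹) := by
  -- uniform bound on coefficients
  set e : ℕ → N → ℝ := fun t x => if t ≤ K then bc (2*t) x else 0 with he
  have hech : ∀ t : ℕ, ∃ M, 0 ≤ M ∧ ∀ x, |e t x| ≤ M := by
    intro t
    by_cases ht : t ≤ K
    · obtain ⟨M, hM⟩ := hbc_bdd (2*t) (even_two_mul t) (by omega)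
      exact ⟨max M 0, le_max_right _ _, fun x => by
        simp only [he, if_pos ht]; exact (hM x).trans (le_max_left _ _)⟩
    · exact ⟨0, le_refl 0, fun x => by simp [he, ht]⟩
  choose Ms hMs0 hMs using hech
  set Mb' : ℝ := ∑ t ∈ range (K+1), Ms t with hMb'
  have hMb'0 : 0 ≤ Mb' := Finset.sum_nonneg fun t _ => hMs0 t
  have hebd : ∀ t x, |e t x| ≤ Mb' := by
    intro t x
    by_cases ht : t ≤ K
    · exact (hMs t x).trans (Finset.single_le_sum (fun i _ => hMs0 i)
        (Finset.mem_range.2 (by omega)))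
    · simp only [he, if_neg ht, abs_zero]; exact hMb'0
  have hemeas : ∀ t, Measurable (e t) := by
    intro t
    by_cases ht : t ≤ K
    · simpa [he, ht] using hbc_meas (2*t) (even_two_mul t) (by omega)
    · simp [he, ht]
  have he0 : ∀ x, e 0 x = bc 0 x := fun x => by simp [he]
  -- the polynomial rewrites to even-power form
  have hpoly : ∀ (x : N) (ε : ℝ), ∑ i ∈ Finset.range (k + 2), (if Even i then bc i x * ε ^ i else 0)
      = ∑ t ∈ range (K+1), e t x * ε ^ (2*t) := by
    intro x ε
    have h2 : k + 2 = 2*(K+1) := by omega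
    rw [h2, sum_even_range (fun i => bc i x * ε ^ i) (K+1)]
    refine Finset.sum_congr rfl fun t ht => ?_
    rw [Finset.mem_range] at ht
    simp only [he, if_pos (by omega : t ≤ K)]
  have hExpPoly : ExpOK K (fun x ε => ∑ t ∈ range (K+1), e t x * ε ^ (2*t)) :=
    ⟨e, 1, 0, Mb', one_pos, le_refl 1, le_refl 0, hMb'0, hemeas, hebd,
      fun x ε _ => by simp⟩
  have hExpb : ExpOK K b := by
    refine hExpPoly.perturb ε₀ C hε₀ hC.le fun x ε hε => ?_
    rw [← hpoly x ε]
    rw [show 2*K+2 = k+2 from by omega]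
    exact hb_approx x ε hε
  -- deviation bound
  set Cg : ℝ := K * Mb' + C with hCg
  have hCg0 : 0 ≤ Cg := by positivity
  have hdev : ∀ x, ∀ ε ∈ Ioo (0:ℝ) (min ε₀ 1), |b x ε - bc 0 x| ≤ Cg * ε ^ 2 := by
    intro x ε hε
    have h0 : (0:ℝ) ≤ ε := le_of_lt hε.1
    have h1 : ε ≤ 1 := (le_of_lt hε.2).trans (min_le_right _ _)
    have hεε₀ : ε ∈ Ioo (0:ℝ) ε₀ := ⟨hε.1, hε.2.trans_le (min_le_left _ _)⟩
    have ha := hb_approx x ε hεε₀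
    rw [hpoly x ε] at ha
    have ht := tail_small (fun t => e t x) Mb' (fun t => hebd t x) K ε h0 h1
    have hpow : ε ^ (k+2) ≤ ε ^ 2 := pow_le_pow_of_le_one h0 h1 (by omega)
    calc |b x ε - bc 0 x|
        = |(b x ε - ∑ t ∈ range (K+1), e t x * ε ^ (2*t))
            + (∑ t ∈ range (K+1), e t x * ε ^ (2*t) - e 0 x)| := by rw [he0 x]; congr 1; ring
      _ ≤ |b x ε - ∑ t ∈ range (K+1), e t x * ε ^ (2*t)|
            + |∑ t ∈ range (K+1), e t x * ε ^ (2*t) - e 0 x| := abs_add_le _ _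
      _ ≤ C * ε ^ (k+2) + K * Mb' * ε ^ 2 := add_le_add ha ht
      _ ≤ C * ε ^ 2 + K * Mb' * ε ^ 2 := by nlinarith
      _ = Cg * ε ^ 2 := by rw [hCg]; ring
  -- choice of εb and bounds on b
  set εb : ℝ := min (min ε₀ 1) (c₀ / (2 * (Cg + 1))) with hεb
  have hεbpos : 0 < εb := lt_min (lt_min hε₀ one_pos) (by positivity)
  have hεb1 : εb ≤ 1 := (min_le_left _ _).trans (min_le_right _ _)
  have hεbε₀ : εb ≤ ε₀ := (min_le_left _ _).trans (min_le_left _ _)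
  have hdev2 : ∀ x, ∀ ε ∈ Ioo (0:ℝ) εb, |b x ε - bc 0 x| ≤ c₀ / 2 := by
    intro x ε hε
    have h0 : (0:ℝ) < ε := hε.1
    have h1 : ε ≤ 1 := (le_of_lt hε.2).trans hεb1
    have hεc : ε ≤ c₀ / (2 * (Cg + 1)) := (le_of_lt hε.2).trans (min_le_right _ _)
    have := hdev x ε ⟨hε.1, hε.2.trans_le (min_le_left _ _)⟩
    have hε2 : ε ^ 2 ≤ ε := by nlinarith
    calc |b x ε - bc 0 x| ≤ Cg * ε ^ 2 := this
      _ ≤ (Cg + 1) * ε := by nlinarith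
      _ ≤ (Cg + 1) * (c₀ / (2 * (Cg + 1))) := by
          apply mul_le_mul_of_nonneg_left hεc (by positivity)
      _ = c₀ / 2 := by field_simp
  have hbnd : ∀ x, ∀ ε ∈ Ioo (0:ℝ) εb, c₀/2 ≤ b x ε ∧ b x ε ≤ Mb' + c₀/2 := by
    intro x ε hε
    have := hdev2 x ε hε
    have h1 := abs_le.1 this
    have h2 := hb0 x
    have h3 : |bc 0 x| ≤ Mb' := by rw [← he0 x]; exact hebd 0 x
    have h4 := abs_le.1 h3
    constructor <;> nlinarith [h1.1, h1.2]
  -- pointwise limit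
  have htend : ∀ x, Tendsto (fun ε => b x ε) (nhdsWithin 0 (Ioi 0)) (nhds (bc 0 x)) := by
    intro x
    have h1 : Tendsto (fun ε : ℝ => b x ε - bc 0 x) (nhdsWithin 0 (Ioi 0)) (nhds 0) := by
      apply squeeze_zero_norm' (a := fun ε => Cg * ε ^ 2)
      · filter_upwards [Ioo_mem_nhdsGT_of_mem (by
          constructor
          · exact le_refl (0:ℝ)
          · exact lt_min (lt_min hε₀ one_pos) (by positivity))] with ε hε
        exact hdev x ε ⟨hε.1, hε.2.trans_le (min_le_left _ _)⟩
      · have : Tendsto (fun ε : ℝ => Cg * ε ^ 2) (nhds 0) (nhds (Cg * 0 ^ 2)) :=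
          (continuous_const.mul (continuous_pow 2)).tendsto 0
        simpa using this.mono_left nhdsWithin_le_nhds
    have := h1.add (tendsto_const_nhds (x := bc 0 x))
    simpa using this
  -- inverse expansion
  have hbne : ∀ x, ∀ ε ∈ Ioo (0:ℝ) εb, b x ε ≠ 0 :=
    fun x ε hε => ne_of_gt (lt_of_lt_of_le (by positivity) (hbnd x ε hε).1)
  have hbc0meas : Measurable (bc 0) := hbc_meas 0 (Even.zero) (by omega)
  have hExpg : ExpOK K (fun x ε => bc 0 x - b x ε) :=
    (expOK_const K (bc 0) hbc0meas Mb' (fun x => by rw [← he0 x]; exact hebd 0 x)).sub hExpb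
  have hExpF : ExpOK K (fun x ε =>
      ∑ s ∈ range (K+1), ((bc 0 x)⁻¹)^(s+1) * (bc 0 x - b x ε)^s) := by
    refine expOK_sum (range (K+1)) _ fun s _ => ?_
    refine (hExpg.pow s).smul (fun x => ((bc 0 x)⁻¹)^(s+1))
      ((hbc0meas.inv).pow_const (s+1)) ((c₀⁻¹)^(s+1)) fun x => ?_
    rw [abs_pow]
    refine pow_le_pow_left₀ (abs_nonneg _) ?_ _
    rw [abs_inv, abs_of_nonneg (hc₀.le.trans (hb0 x))]
    exact inv_anti₀ hc₀ (hb0 x)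
  have hExpbinv : ExpOK K (fun x ε => (b x ε)⁻¹) := by
    refine hExpF.perturb εb (Cg^(K+1) * (c₀⁻¹)^(K+1) * (2/c₀)) hεbpos (by positivity)
      fun x ε hε => ?_
    have hid := geom_id (bc 0 x) (b x ε) (ne_of_gt (hc₀.trans_le (hb0 x))) (hbne x ε hε) (K+1)
    have h0 : (0:ℝ) < ε := hε.1
    have h1 : ε ≤ 1 := (le_of_lt hε.2).trans hεb1
    have hg : |bc 0 x - b x ε| ≤ Cg * ε ^ 2 := by
      rw [abs_sub_comm]
      exact hdev x ε ⟨hε.1, hε.2.trans_le (min_le_left _ _)⟩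
    have hB : c₀/2 ≤ b x ε := (hbnd x ε hε).1
    have hAi : |(bc 0 x)⁻¹| ≤ c₀⁻¹ := by
      rw [abs_inv, abs_of_nonneg (hc₀.le.trans (hb0 x))]
      exact inv_anti₀ hc₀ (hb0 x)
    have hBi : |(b x ε)⁻¹| ≤ 2/c₀ := by
      rw [abs_inv, abs_of_nonneg ((by positivity : (0:ℝ) < c₀/2).le.trans hB)]
      calc (b x ε)⁻¹ ≤ (c₀/2)⁻¹ := inv_anti₀ (by positivity) hB
        _ = 2/c₀ := by rw [inv_div]
    calc |(b x ε)⁻¹ - ∑ s ∈ range (K+1), ((bc 0 x)⁻¹)^(s+1) * (bc 0 x - b x ε)^s|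
        = |(bc 0 x - b x ε)^(K+1)| * |((bc 0 x)⁻¹)^(K+1)| * |(b x ε)⁻¹| := by
          rw [hid, abs_mul, abs_mul]
      _ ≤ (Cg * ε^2)^(K+1) * (c₀⁻¹)^(K+1) * (2/c₀) := by
          refine mul_le_mul (mul_le_mul ?_ ?_ (abs_nonneg _) (by positivity)) hBi
            (abs_nonneg _) (by positivity)
          · rw [abs_pow]; exact pow_le_pow_left₀ (abs_nonneg _) hg _
          · rw [abs_pow]; exact pow_le_pow_left₀ (abs_nonneg _) hAi _
      _ = Cg^(K+1) * (c₀⁻¹)^(K+1) * (2/c₀) * ε^(2*K+2) := by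
          rw [mul_pow, ← pow_mul, show 2*(K+1) = 2*K+2 from by ring]
          ring
  exact ⟨εb, Mb' + c₀/2, hεbpos, hεbε₀, hεb1, by positivity, hbnd, htend, hExpb, hExpbinv⟩

end

/-- Reindexing lemma for the negative-power sums. -/
lemma reindex_aux (q : ℕ → ℝ) (c : ℝ) (p : ℕ) :
    ∑ m ∈ range (2*p+1), (if Even m ∧ 2 ≤ m then q ((2*p-m)/2) * c^m else 0)
      = ∑ t ∈ range p, q t * c^(2*p-2*t) := by
  induction p generalizing q with
  | zero => simp
  | succ p ih =>
      have h1 : 2*(p+1)+1 = (2*p+1) + 1 + 1 := by ring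
      rw [h1, Finset.sum_range_succ, Finset.sum_range_succ]
      have hodd : ¬(Even (2*p+1) ∧ 2 ≤ 2*p+1) := by
        rintro ⟨⟨r, hr⟩, -⟩; omega
      have heven : Even (2*p+1+1) ∧ 2 ≤ 2*p+1+1 := ⟨⟨p+1, by ring⟩, by omega⟩
      rw [if_neg hodd, if_pos heven]
      have hmain : ∑ m ∈ range (2*p+1), (if Even m ∧ 2 ≤ m then q ((2*(p+1)-m)/2) * c^m else 0)
          = ∑ m ∈ range (2*p+1), (if Even m ∧ 2 ≤ m then (fun t => q (t+1)) ((2*p-m)/2) * c^m else 0) := by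
        refine Finset.sum_congr rfl fun m hm => ?_
        rw [Finset.mem_range] at hm
        by_cases h : Even m ∧ 2 ≤ m
        · rw [if_pos h, if_pos h]
          obtain ⟨r, hr⟩ := h.1
          have : (2*(p+1)-m)/2 = (2*p-m)/2 + 1 := by omega
          rw [this]
        · rw [if_neg h, if_neg h]
      rw [hmain, ih (fun t => q (t+1))]
      have hR : ∑ t ∈ range (p+1), q t * c^(2*(p+1)-2*t)
          = (∑ t ∈ range p, q (t+1) * c^(2*p-2*t)) + q 0 * c^(2*p+1+1) := by
        rw [Finset.sum_range_succ' (fun t => q t * c^(2*(p+1)-2*t)) p]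
        congr 1
        · refine Finset.sum_congr rfl fun t ht => ?_
          rw [Finset.mem_range] at ht
          have h4 : 2*(p+1)-2*(t+1) = 2*p-2*t := by omega
          rw [h4]
      have h2 : (2*(p+1)-(2*p+1+1))/2 = 0 := by omega
      rw [hR, h2]
      ring

section
variable {N : Type*} [MeasurableSpace N]

/-- The singular sum to be subtracted. -/
noncomputable def DSum (k : ℕ) (W : ℕ → N → ℝ) (x : N) (ε : ℝ) : ℝ :=
  ∑ m ∈ range (k+1), (if Even m ∧ 2 ≤ m then W m x * ε ^ (-(m:ℤ)) else 0)

/-- `F` decomposes as a sum of even negative powers of `ε` plus a function converging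
(boundedly) as `ε → 0⁺`. -/
def Decomp (k : ℕ) (F : N → ℝ → ℝ) : Prop :=
  ∃ (W : ℕ → N → ℝ) (h₀ : N → ℝ) (ε₃ MW Mh : ℝ), 0 < ε₃ ∧ ε₃ ≤ 1 ∧
    (∀ m, Measurable (W m)) ∧ (∀ m x, |W m x| ≤ MW) ∧ Measurable h₀ ∧
    (∀ ε ∈ Ioo (0:ℝ) ε₃, Measurable (fun x => F x ε)) ∧
    (∀ x, ∀ ε ∈ Ioo (0:ℝ) ε₃, |F x ε - DSum k W x ε| ≤ Mh) ∧
    (∀ x, Tendsto (fun ε => F x ε - DSum k W x ε) (nhdsWithin 0 (Ioi 0)) (nhds (h₀ x)))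

lemma DSum_zero (k : ℕ) (x : N) (ε : ℝ) : DSum k (fun _ _ => (0:ℝ)) x ε = 0 := by
  rw [DSum]
  refine Finset.sum_eq_zero fun m _ => ?_
  by_cases h : Even m ∧ 2 ≤ m <;> simp [h]

lemma DSum_add (k : ℕ) (W₁ W₂ : ℕ → N → ℝ) (x : N) (ε : ℝ) :
    DSum k (fun m x => W₁ m x + W₂ m x) x ε = DSum k W₁ x ε + DSum k W₂ x ε := by
  rw [DSum, DSum, DSum, ← Finset.sum_add_distrib]
  refine Finset.sum_congr rfl fun m _ => ?_
  by_cases h : Even m ∧ 2 ≤ m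
  · rw [if_pos h, if_pos h, if_pos h]; ring
  · rw [if_neg h, if_neg h, if_neg h]; ring

lemma DSum_meas (k : ℕ) (W : ℕ → N → ℝ) (hW : ∀ m, Measurable (W m)) (ε : ℝ) :
    Measurable (fun x => DSum k W x ε) := by
  refine Finset.measurable_sum _ fun m _ => ?_
  by_cases h : Even m ∧ 2 ≤ m
  · simpa [h] using (hW m).mul_const (ε ^ (-(m:ℤ)))
  · simp [h]

lemma decomp_of_tendsto (k : ℕ) (F : N → ℝ → ℝ) (h₀ : N → ℝ) (ε₃ Mh : ℝ) (hε₃ : 0 < ε₃)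
    (hε₃1 : ε₃ ≤ 1)
    (hFmeas : ∀ ε ∈ Ioo (0:ℝ) ε₃, Measurable (fun x => F x ε)) (hm0 : Measurable h₀)
    (hbd : ∀ x, ∀ ε ∈ Ioo (0:ℝ) ε₃, |F x ε| ≤ Mh)
    (htd : ∀ x, Tendsto (fun ε => F x ε) (nhdsWithin 0 (Ioi 0)) (nhds (h₀ x))) :
    Decomp k F := by
  refine ⟨fun _ _ => 0, h₀, ε₃, 0, Mh, hε₃, hε₃1, fun _ => measurable_const,
    fun m x => by simp, hm0, hFmeas, ?_, ?_⟩
  · intro x ε hε; rw [DSum_zero]; simpa using hbd x ε hε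
  · intro x
    have : (fun ε => F x ε - DSum k (fun _ _ => (0:ℝ)) x ε) = fun ε => F x ε := by
      funext ε; rw [DSum_zero]; ring
    rw [this]; exact htd x

lemma Decomp.add {k : ℕ} {F₁ F₂ : N → ℝ → ℝ} (h₁ : Decomp k F₁) (h₂ : Decomp k F₂) :
    Decomp k (fun x ε => F₁ x ε + F₂ x ε) := by
  obtain ⟨W₁, g₁, ε₁, MW₁, Mh₁, hε₁, hε₁1, hWm₁, hWb₁, hg₁, hFm₁, hbd₁, htd₁⟩ := h₁
  obtain ⟨W₂, g₂, ε₂, MW₂, Mh₂, hε₂, hε₂1, hWm₂, hWb₂, hg₂, hFm₂, hbd₂, htd₂⟩ := h₂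
  refine ⟨fun m x => W₁ m x + W₂ m x, fun x => g₁ x + g₂ x, min ε₁ ε₂, MW₁ + MW₂, Mh₁ + Mh₂,
    lt_min hε₁ hε₂, (min_le_left _ _).trans hε₁1,
    fun m => (hWm₁ m).add (hWm₂ m),
    fun m x => (abs_add_le _ _).trans (add_le_add (hWb₁ m x) (hWb₂ m x)),
    hg₁.add hg₂, ?_, ?_, ?_⟩
  · intro ε hε
    exact (hFm₁ ε ⟨hε.1, hε.2.trans_le (min_le_left _ _)⟩).add
      (hFm₂ ε ⟨hε.1, hε.2.trans_le (min_le_right _ _)⟩)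
  · intro x ε hε
    rw [DSum_add]
    calc |F₁ x ε + F₂ x ε - (DSum k W₁ x ε + DSum k W₂ x ε)|
        = |(F₁ x ε - DSum k W₁ x ε) + (F₂ x ε - DSum k W₂ x ε)| := by congr 1; ring
      _ ≤ |F₁ x ε - DSum k W₁ x ε| + |F₂ x ε - DSum k W₂ x ε| := abs_add_le _ _
      _ ≤ Mh₁ + Mh₂ := add_le_add (hbd₁ x ε ⟨hε.1, hε.2.trans_le (min_le_left _ _)⟩)
            (hbd₂ x ε ⟨hε.1, hε.2.trans_le (min_le_right _ _)⟩)
  · intro x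
    have : (fun ε => F₁ x ε + F₂ x ε - DSum k (fun m x => W₁ m x + W₂ m x) x ε)
        = fun ε => (F₁ x ε - DSum k W₁ x ε) + (F₂ x ε - DSum k W₂ x ε) := by
      funext ε; rw [DSum_add]; ring
    rw [this]
    exact (htd₁ x).add (htd₂ x)

lemma decomp_zero (k : ℕ) : Decomp k (fun (_ : N) (_ : ℝ) => (0:ℝ)) :=
  decomp_of_tendsto k _ (fun _ => 0) 1 0 one_pos (le_refl 1)
    (fun _ _ => measurable_const) measurable_const (fun x ε _ => by simp)
    (fun x => tendsto_const_nhds)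

lemma decomp_sum {k : ℕ} {ι : Type*} (s : Finset ι) (F : ι → N → ℝ → ℝ)
    (h : ∀ i ∈ s, Decomp k (F i)) : Decomp k (fun x ε => ∑ i ∈ s, F i x ε) := by
  classical
  induction s using Finset.cons_induction with
  | empty => simpa using decomp_zero k
  | cons a s ha ih =>
      have heq : (fun x ε => ∑ i ∈ Finset.cons a s ha, F i x ε)
          = fun x ε => F a x ε + ∑ i ∈ s, F i x ε := by
        funext x ε; rw [Finset.sum_cons]
      rw [heq]
      exact (h a (Finset.mem_cons_self _ _)).add (ih fun i hi => h i (Finset.mem_cons_of_mem hi))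

end

section
variable {N : Type*} [MeasurableSpace N]

lemma decomp_block (k K n : ℕ) (hkK : k = 2*K) (hn2 : 2 ≤ n) (hnk : n ≤ k) (hne : Even n)
    (v : N → ℝ) (hv : Measurable v) (Mv : ℝ) (hMv0 : 0 ≤ Mv) (hMv : ∀ x, |v x| ≤ Mv)
    (G : N → ℝ → ℝ) (hG : ExpOK K G) (hGmeas : ∀ ε : ℝ, Measurable (fun x => G x ε)) :
    Decomp k (fun x ε => (v x / (-(n:ℝ))) * ((ε⁻¹)^n * G x ε - (ε⁻¹)^n)) := by
  obtain ⟨p, hp⟩ := hne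
  have hn2p : n = 2*p := by omega
  have hp1 : 1 ≤ p := by omega
  have hpK : p ≤ K := by omega
  obtain ⟨e, ε₁, Ce, Me, hε₁, hε₁1, hCe, hMe, hemeas, hebd, hexp⟩ := hG
  have hvn : ∀ x, |v x / (-(n:ℝ))| ≤ Mv / 2 := by
    intro x
    rw [abs_div, abs_neg, Nat.abs_cast]
    exact div_le_div₀ hMv0 (hMv x) two_pos (by exact_mod_cast hn2)
  set W : ℕ → N → ℝ := fun m x => if m ≤ n
      then (v x / (-(n:ℝ))) * (e ((n-m)/2) x - (if m = n then 1 else 0)) else 0 with hW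
  set h₀ : N → ℝ := fun x => (v x / (-(n:ℝ))) * e p x with hh₀
  set CC : ℝ := (Mv/2) * (Ce + K*Me) with hCC
  have hCC0 : 0 ≤ CC := by positivity
  have hh₀bd : ∀ x, |h₀ x| ≤ (Mv/2) * Me := by
    intro x
    rw [hh₀, abs_mul]
    exact mul_le_mul (hvn x) (hebd p x) (abs_nonneg _) (by positivity)
  -- key pointwise estimate
  have hkey : ∀ x, ∀ ε ∈ Ioo (0:ℝ) ε₁,
      |((v x / (-(n:ℝ))) * ((ε⁻¹)^n * G x ε - (ε⁻¹)^n)) - DSum k W x ε - h₀ x| ≤ CC * ε^2 := by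
    intro x ε hε
    have hε0 : (0:ℝ) < ε := hε.1
    have hεne : ε ≠ 0 := ne_of_gt hε0
    have hε1 : ε ≤ 1 := (le_of_lt hε.2).trans hε₁1
    have hzp : ∀ m : ℕ, (ε:ℝ)^(-(m:ℤ)) = (ε⁻¹)^m := by
      intro m; rw [zpow_neg, zpow_natCast, inv_pow]
    have hnk1 : n < k+1 := by omega
    -- DSum in closed form
    have hD : DSum k W x ε = (v x / (-(n:ℝ)))
        * ((∑ m ∈ range (k+1), (if Even m ∧ 2 ≤ m ∧ m ≤ n then e ((n-m)/2) x * (ε⁻¹)^m else 0))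
            - (ε⁻¹)^n) := by
      rw [DSum, mul_sub, Finset.mul_sum]
      have hB : (v x / (-(n:ℝ))) * (ε⁻¹)^n
          = ∑ m ∈ range (k+1), (if m = n then (v x / (-(n:ℝ))) * (ε⁻¹)^m else 0) := by
        rw [Finset.sum_ite_eq' (range (k+1)) n (fun m => (v x / (-(n:ℝ))) * (ε⁻¹)^m),
          if_pos (Finset.mem_range.2 hnk1)]
      rw [hB, ← Finset.sum_sub_distrib]
      refine Finset.sum_congr rfl fun m hm => ?_
      by_cases h1 : Even m ∧ 2 ≤ m
      · rw [if_pos h1, hzp m]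
        by_cases h2 : m ≤ n
        · rw [if_pos ⟨h1.1, h1.2, h2⟩]
          simp only [hW]
          rw [if_pos h2]
          by_cases h3 : m = n
          · rw [if_pos h3, if_pos h3]; ring
          · rw [if_neg h3, if_neg h3]; ring
        · rw [if_neg (fun hc : Even m ∧ 2 ≤ m ∧ m ≤ n => h2 hc.2.2)]
          simp only [hW]
          rw [if_neg h2, if_neg (fun h3 : m = n => h2 (le_of_eq h3))]
          ring
      · rw [if_neg h1]
        have h3 : ¬ m = n := fun hc => h1 (hc ▸ ⟨⟨p, hp⟩, hn2⟩)
        rw [if_neg (fun hc : Even m ∧ 2 ≤ m ∧ m ≤ n => h1 ⟨hc.1, hc.2.1⟩), if_neg h3]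
        ring
    -- reindex the sum
    have hsub : ∑ m ∈ range (k+1), (if Even m ∧ 2 ≤ m ∧ m ≤ n then e ((n-m)/2) x * (ε⁻¹)^m else 0)
        = ∑ t ∈ range p, e t x * (ε⁻¹)^(2*p-2*t) := by
      have step1 : ∑ m ∈ range (2*p+1), (if Even m ∧ 2 ≤ m ∧ m ≤ n then e ((n-m)/2) x * (ε⁻¹)^m else 0)
          = ∑ m ∈ range (k+1), (if Even m ∧ 2 ≤ m ∧ m ≤ n then e ((n-m)/2) x * (ε⁻¹)^m else 0) := by
        refine Finset.sum_subset (Finset.range_subset_range.2 (by omega)) fun m hm hns => ?_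
        rw [Finset.mem_range] at hm
        rw [Finset.mem_range] at hns
        rw [if_neg]
        rintro ⟨-, -, hmn⟩
        omega
      rw [← step1]
      have step2 : ∑ m ∈ range (2*p+1), (if Even m ∧ 2 ≤ m ∧ m ≤ n then e ((n-m)/2) x * (ε⁻¹)^m else 0)
          = ∑ m ∈ range (2*p+1), (if Even m ∧ 2 ≤ m then e ((2*p-m)/2) x * (ε⁻¹)^m else 0) := by
        refine Finset.sum_congr rfl fun m hm => ?_
        rw [Finset.mem_range] at hm
        by_cases h1 : Even m ∧ 2 ≤ m
        · rw [if_pos ⟨h1.1, h1.2, by omega⟩, if_pos h1, hn2p]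
        · rw [if_neg (fun hc : Even m ∧ 2 ≤ m ∧ m ≤ n => h1 ⟨hc.1, hc.2.1⟩), if_neg h1]
      rw [step2, reindex_aux (fun t => e t x) ε⁻¹ p]
    -- splitting the expansion polynomial
    set Q : ℝ := ∑ t ∈ range (K+1), e t x * ε^(2*t) with hQ
    have hRem : |G x ε - Q| ≤ Ce * ε^(2*K+2) := hexp x ε hε
    have hone : ∀ t : ℕ, (ε:ℝ)^(2*t) * (ε⁻¹)^(2*t) = 1 := by
      intro t; rw [← mul_pow, mul_inv_cancel₀ hεne, one_pow]
    have hpow1 : ∀ t, t ≤ p → (ε:ℝ)^(2*t) * (ε⁻¹)^(2*p) = (ε⁻¹)^(2*p-2*t) := by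
      intro t ht
      calc ε^(2*t) * (ε⁻¹)^(2*p) = ε^(2*t) * ((ε⁻¹)^(2*t) * (ε⁻¹)^(2*p-2*t)) := by
            rw [← pow_add]; congr 2; omega
        _ = (ε^(2*t) * (ε⁻¹)^(2*t)) * (ε⁻¹)^(2*p-2*t) := by ring
        _ = (ε⁻¹)^(2*p-2*t) := by rw [hone t, one_mul]
    have hpow2 : ∀ i : ℕ, (ε:ℝ)^(2*(p+i)) * (ε⁻¹)^(2*p) = ε^(2*i) := by
      intro i
      have h6 : 2*(p+i) = 2*p + 2*i := by ring
      rw [h6, pow_add]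
      calc ε^(2*p) * ε^(2*i) * (ε⁻¹)^(2*p) = (ε^(2*p) * (ε⁻¹)^(2*p)) * ε^(2*i) := by ring
        _ = ε^(2*i) := by rw [hone p, one_mul]
    have hQsplit : (ε⁻¹)^n * Q = (∑ t ∈ range p, e t x * (ε⁻¹)^(2*p-2*t)) + e p x
        + ∑ i ∈ range (K-p), e (p+(i+1)) x * ε^(2*(i+1)) := by
      have hsplit : (∑ t ∈ Finset.Ico 0 p, e t x * ε^(2*t))
          + ∑ t ∈ Finset.Ico p (K+1), e t x * ε^(2*t)
          = ∑ t ∈ Finset.Ico 0 (K+1), e t x * ε^(2*t) :=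
        Finset.sum_Ico_consecutive _ (Nat.zero_le p) (by omega)
      have hQ' : Q = (∑ t ∈ range p, e t x * ε^(2*t))
          + ∑ t ∈ Finset.Ico p (K+1), e t x * ε^(2*t) := by
        rw [hQ, Finset.range_eq_Ico, ← hsplit, ← Finset.range_eq_Ico]
      have hIco : ∑ t ∈ Finset.Ico p (K+1), e t x * ε^(2*t)
          = ∑ i ∈ range (K+1-p), e (p+i) x * ε^(2*(p+i)) := by
        rw [Finset.sum_Ico_eq_sum_range]
      have hKp : K+1-p = (K-p)+1 := by omega
      have hA : ∑ t ∈ range p, e t x * ε^(2*t) * (ε⁻¹)^(2*p)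
          = ∑ t ∈ range p, e t x * (ε⁻¹)^(2*p-2*t) := by
        refine Finset.sum_congr rfl fun t ht => ?_
        rw [Finset.mem_range] at ht
        rw [mul_assoc, hpow1 t (by omega)]
      have hBsum : ∑ i ∈ range (K+1-p), e (p+i) x * ε^(2*(p+i)) * (ε⁻¹)^(2*p)
          = e p x + ∑ i ∈ range (K-p), e (p+(i+1)) x * ε^(2*(i+1)) := by
        rw [hKp, Finset.sum_range_succ' (fun i => e (p+i) x * ε^(2*(p+i)) * (ε⁻¹)^(2*p)) (K-p)]
        have hz : e (p+0) x * ε^(2*(p+0)) * (ε⁻¹)^(2*p) = e p x := by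
          rw [Nat.add_zero, mul_assoc, hone p, mul_one]
        have hterm : ∀ i ∈ range (K-p), e (p+(i+1)) x * ε^(2*(p+(i+1))) * (ε⁻¹)^(2*p)
            = e (p+(i+1)) x * ε^(2*(i+1)) := by
          intro i _
          rw [mul_assoc, hpow2 (i+1)]
        rw [hz, Finset.sum_congr rfl hterm]
        ring
      rw [hQ', hIco, hn2p, mul_comm ((ε⁻¹)^(2*p)) _, add_mul, Finset.sum_mul, Finset.sum_mul,
        hA, hBsum]
      ring
    -- the difference
    have hmain : (v x / (-(n:ℝ))) * ((ε⁻¹)^n * G x ε - (ε⁻¹)^n) - DSum k W x ε - h₀ x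
        = (v x / (-(n:ℝ))) * ((ε⁻¹)^n * (G x ε - Q)
            + ∑ i ∈ range (K-p), e (p+(i+1)) x * ε^(2*(i+1))) := by
      rw [hD, hsub, hh₀]
      linear_combination (v x / (-(n:ℝ))) * hQsplit
    rw [hmain]
    -- estimates
    obtain ⟨d, hd1, hd2⟩ : ∃ d, 2*K+2 = 2*p + d ∧ 2 ≤ d := ⟨2*K+2-2*p, by omega, by omega⟩
    have h7 : |(ε⁻¹)^n * (G x ε - Q)| ≤ Ce * ε^2 := by
      rw [abs_mul, abs_pow, abs_inv, abs_of_pos hε0, hn2p]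
      calc (ε⁻¹)^(2*p) * |G x ε - Q| ≤ (ε⁻¹)^(2*p) * (Ce * ε^(2*K+2)) :=
            mul_le_mul_of_nonneg_left hRem (by positivity)
        _ = Ce * ε^d := by
            rw [hd1, pow_add]
            calc (ε⁻¹)^(2*p) * (Ce * (ε^(2*p) * ε^d))
                = Ce * ε^d * (ε^(2*p) * (ε⁻¹)^(2*p)) := by ring
              _ = Ce * ε^d := by rw [hone p, mul_one]
        _ ≤ Ce * ε^2 := mul_le_mul_of_nonneg_left
              (pow_le_pow_of_le_one hε0.le hε1 hd2) hCe
    have h9 : |∑ i ∈ range (K-p), e (p+(i+1)) x * ε^(2*(i+1))| ≤ K * Me * ε^2 := by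
      calc |∑ i ∈ range (K-p), e (p+(i+1)) x * ε^(2*(i+1))|
          ≤ ∑ i ∈ range (K-p), |e (p+(i+1)) x * ε^(2*(i+1))| := Finset.abs_sum_le_sum_abs _ _
        _ ≤ ∑ i ∈ range (K-p), Me * ε^2 := by
            refine Finset.sum_le_sum fun i _ => ?_
            rw [abs_mul, abs_pow, abs_of_pos hε0]
            exact mul_le_mul (hebd _ x) (pow_le_pow_of_le_one hε0.le hε1 (by omega))
              (by positivity) ((abs_nonneg _).trans (hebd 0 x))
        _ = (K-p : ℕ) * (Me * ε^2) := by rw [Finset.sum_const, card_range, nsmul_eq_mul]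
        _ ≤ K * Me * ε^2 := by
            have : ((K-p : ℕ) : ℝ) ≤ (K : ℝ) := by exact_mod_cast Nat.sub_le K p
            have hMe0 : 0 ≤ Me := (abs_nonneg _).trans (hebd 0 x)
            calc ((K-p : ℕ) : ℝ) * (Me * ε^2) ≤ (K : ℝ) * (Me * ε^2) :=
                mul_le_mul_of_nonneg_right this (by positivity)
              _ = K * Me * ε^2 := by ring
    calc |(v x / (-(n:ℝ))) * ((ε⁻¹)^n * (G x ε - Q)
            + ∑ i ∈ range (K-p), e (p+(i+1)) x * ε^(2*(i+1)))|
        = |v x / (-(n:ℝ))| * |(ε⁻¹)^n * (G x ε - Q)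
            + ∑ i ∈ range (K-p), e (p+(i+1)) x * ε^(2*(i+1))| := abs_mul _ _
      _ ≤ (Mv/2) * (Ce * ε^2 + K * Me * ε^2) := by
          refine mul_le_mul (hvn x) ((abs_add_le _ _).trans (add_le_add h7 h9)) (abs_nonneg _)
            (by positivity)
      _ = CC * ε^2 := by rw [hCC]; ring
  -- assemble the decomposition
  refine ⟨W, h₀, ε₁, (Mv/2) * (Me+1), (Mv/2)*Me + CC, hε₁, hε₁1, ?_, ?_, ?_, ?_, ?_, ?_⟩
  · intro m
    simp only [hW]
    by_cases h : m ≤ n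
    · simp only [if_pos h]
      exact (hv.div_const _).mul ((hemeas _).sub measurable_const)
    · simp [h]
  · intro m x
    simp only [hW]
    by_cases h : m ≤ n
    · rw [if_pos h, abs_mul]
      refine mul_le_mul (hvn x) ?_ (abs_nonneg _) (by positivity)
      refine (abs_sub _ _).trans (add_le_add (hebd _ x) ?_)
      by_cases h3 : m = n <;> simp [h3]
    · rw [if_neg h, abs_zero]; positivity
  · exact (hv.div_const _).mul (hemeas p)
  · intro ε hε
    exact (hv.div_const _).mul ((measurable_const.mul (hGmeas ε)).sub measurable_const)
  · intro x ε hε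
    calc |(v x / (-(n:ℝ))) * ((ε⁻¹)^n * G x ε - (ε⁻¹)^n) - DSum k W x ε|
        = |(((v x / (-(n:ℝ))) * ((ε⁻¹)^n * G x ε - (ε⁻¹)^n) - DSum k W x ε - h₀ x)) + h₀ x| := by
          congr 1; ring
      _ ≤ |(v x / (-(n:ℝ))) * ((ε⁻¹)^n * G x ε - (ε⁻¹)^n) - DSum k W x ε - h₀ x| + |h₀ x| :=
          abs_add_le _ _
      _ ≤ CC * ε^2 + (Mv/2)*Me := add_le_add (hkey x ε hε) (hh₀bd x)
      _ ≤ (Mv/2)*Me + CC := by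
          have hε1 : ε ≤ 1 := (le_of_lt hε.2).trans hε₁1
          nlinarith [hCC0, pow_le_one₀ hε.1.le hε1 (n := 2)]
  · intro x
    have h1 : Tendsto (fun ε => (v x / (-(n:ℝ))) * ((ε⁻¹)^n * G x ε - (ε⁻¹)^n)
        - DSum k W x ε - h₀ x) (nhdsWithin 0 (Ioi 0)) (nhds 0) := by
      apply squeeze_zero_norm' (a := fun ε => CC * ε^2)
      · filter_upwards [Ioo_mem_nhdsGT_of_mem (by constructor; exact le_refl (0:ℝ); exact hε₁)]
          with ε hε
        exact hkey x ε hε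
      · have : Tendsto (fun ε : ℝ => CC * ε ^ 2) (nhds 0) (nhds (CC * 0 ^ 2)) :=
          (continuous_const.mul (continuous_pow 2)).tendsto 0
        simpa using this.mono_left nhdsWithin_le_nhds
    have := h1.add (tendsto_const_nhds (x := h₀ x))
    simp only [sub_add_cancel, zero_add] at this
    exact this

end

section
variable {N : Type*} [MeasurableSpace N]

lemma decomp_integrate (ν : Measure N) [IsFiniteMeasure ν] (k : ℕ) (F : N → ℝ → ℝ)
    (h : Decomp k F) :
    ∃ (a : ℕ → ℝ) (c : ℝ),
      Tendsto (fun ε : ℝ => (∫ x, F x ε ∂ν)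
          - ∑ m ∈ Finset.range (k + 1), (if Even m ∧ 2 ≤ m then a m * ε ^ (-(m : ℤ)) else 0))
        (nhdsWithin 0 (Ioi 0)) (nhds c) := by
  obtain ⟨W, h₀, ε₃, MW, Mh, hε₃, hε₃1, hWm, hWb, hh₀m, hFm, hbd, htd⟩ := h
  refine ⟨fun m => ∫ x, W m x ∂ν, ∫ x, h₀ x ∂ν, ?_⟩
  have hIntW : ∀ m, Integrable (W m) ν := fun m =>
    (integrable_const MW).mono' (hWm m).aestronglyMeasurable
      (ae_of_all _ fun x => by rw [Real.norm_eq_abs]; exact hWb m x)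
  have hIntDSum : ∀ ε : ℝ, Integrable (fun x => DSum k W x ε) ν := by
    intro ε
    refine integrable_finset_sum _ fun m _ => ?_
    by_cases hc : Even m ∧ 2 ≤ m
    · simpa [hc] using (hIntW m).mul_const (ε ^ (-(m:ℤ)))
    · simpa [hc] using integrable_const (0:ℝ)
  have hIntDiff : ∀ ε ∈ Ioo (0:ℝ) ε₃, Integrable (fun x => F x ε - DSum k W x ε) ν := by
    intro ε hε
    exact (integrable_const Mh).mono'
      (((hFm ε hε).sub (DSum_meas k W hWm ε)).aestronglyMeasurable)
      (ae_of_all _ fun x => by rw [Real.norm_eq_abs]; exact hbd x ε hε)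
  have hDS : ∀ ε : ℝ, (∫ x, DSum k W x ε ∂ν)
      = ∑ m ∈ Finset.range (k+1),
          (if Even m ∧ 2 ≤ m then (∫ x, W m x ∂ν) * ε ^ (-(m:ℤ)) else 0) := by
    intro ε
    have h1 : (∫ x, DSum k W x ε ∂ν)
        = ∑ m ∈ range (k+1), ∫ x, (if Even m ∧ 2 ≤ m then W m x * ε ^ (-(m:ℤ)) else 0) ∂ν := by
      rw [← integral_finset_sum]
      · rfl
      · intro m _
        by_cases hc : Even m ∧ 2 ≤ m
        · simpa [hc] using (hIntW m).mul_const (ε ^ (-(m:ℤ)))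
        · simpa [hc] using integrable_const (0:ℝ)
    rw [h1]
    refine Finset.sum_congr rfl fun m _ => ?_
    by_cases hc : Even m ∧ 2 ≤ m
    · simp only [if_pos hc]
      exact integral_mul_const _ _
    · simp only [if_neg hc, integral_zero]
  have hkey : ∀ ε ∈ Ioo (0:ℝ) ε₃,
      (∫ x, F x ε ∂ν) - ∑ m ∈ Finset.range (k+1),
          (if Even m ∧ 2 ≤ m then (∫ x, W m x ∂ν) * ε ^ (-(m:ℤ)) else 0)
        = ∫ x, (F x ε - DSum k W x ε) ∂ν := by
    intro ε hε
    have hIF : Integrable (fun x => F x ε) ν := by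
      have h2 := (hIntDiff ε hε).add (hIntDSum ε)
      have h3 : ((fun x => F x ε - DSum k W x ε) + fun x => DSum k W x ε)
          = fun x => F x ε := by
        funext x; simp
      rwa [h3] at h2
    rw [← hDS ε, ← integral_sub hIF (hIntDSum ε)]
  have hdom : Tendsto (fun ε => ∫ x, (F x ε - DSum k W x ε) ∂ν) (nhdsWithin 0 (Ioi 0))
      (nhds (∫ x, h₀ x ∂ν)) := by
    refine tendsto_integral_filter_of_dominated_convergence (fun _ => Mh) ?_ ?_
      (integrable_const Mh) ?_
    · filter_upwards [Ioo_mem_nhdsGT_of_mem ⟨le_refl (0:ℝ), hε₃⟩] with ε hε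
      exact ((hFm ε hε).sub (DSum_meas k W hWm ε)).aestronglyMeasurable
    · filter_upwards [Ioo_mem_nhdsGT_of_mem ⟨le_refl (0:ℝ), hε₃⟩] with ε hε
      exact ae_of_all _ fun x => by rw [Real.norm_eq_abs]; exact hbd x ε hε
    · exact ae_of_all _ fun x => htd x
  refine Tendsto.congr' ?_ hdom
  filter_upwards [Ioo_mem_nhdsGT_of_mem ⟨le_refl (0:ℝ), hε₃⟩] with ε hε
  exact (hkey ε hε).symm

end

/-- Graham–Witten, Proposition 2 (case `k` even): the difference of regularized areas
computed with two special defining functions has only even negative powers of `ε`, no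
`log(1/ε)` term, and a finite constant term as `ε → 0⁺`. -/
theorem stmt_1
    {N : Type*} [MeasurableSpace N] (ν : Measure N) [IsFiniteMeasure ν]
    (k : ℕ) (hk_even : Even k)
    (v : ℕ → N → ℝ)
    (hv_meas : ∀ j, Even j → j ≤ k → Measurable (v j))
    (hv_bdd : ∀ j, Even j → j ≤ k → ∃ M : ℝ, ∀ x, |v j x| ≤ M)
    (ε₀ C c₀ : ℝ) (hε₀ : 0 < ε₀) (hC : 0 < C) (hc₀ : 0 < c₀)
    (bc : ℕ → N → ℝ)
    (hbc_meas : ∀ i, Even i → i ≤ k + 1 → Measurable (bc i))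
    (hbc_bdd : ∀ i, Even i → i ≤ k + 1 → ∃ M : ℝ, ∀ x, |bc i x| ≤ M)
    (hb0 : ∀ x, c₀ ≤ bc 0 x)
    (b : N → ℝ → ℝ)
    (hb_meas : Measurable (Function.uncurry b))
    (hb_pos : ∀ x, ∀ ε ∈ Ioo (0 : ℝ) ε₀, 0 < b x ε)
    (hb_approx : ∀ x, ∀ ε ∈ Ioo (0 : ℝ) ε₀,
      |b x ε - ∑ i ∈ Finset.range (k + 2), (if Even i then bc i x * ε ^ i else 0)|
        ≤ C * ε ^ (k + 2)) :
    ∃ (a : ℕ → ℝ) (c : ℝ),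
      Tendsto (fun ε : ℝ =>
          (∫ x, (∫ r in ε..(ε * b x ε),
              ∑ j ∈ Finset.range (k + 1),
                (if Even j then v j x * r ^ ((j : ℤ) - (k : ℤ) - 1) else 0)) ∂ν)
          - ∑ m ∈ Finset.range (k + 1),
              (if Even m ∧ 2 ≤ m then a m * ε ^ (-(m : ℤ)) else 0))
        (nhdsWithin 0 (Ioi 0)) (nhds c) := by
  classical
  obtain ⟨K, hK⟩ := hk_even
  have hkK : k = 2*K := by omega
  have hk_even' : Even k := ⟨K, hK⟩
  obtain ⟨εb, Mb, hεbpos, hεbε₀, hεb1, hMbpos, hbnd, htendb, hExpb, hExpbinv⟩ :=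
    b_package k K hkK ε₀ C c₀ hε₀ hC hc₀ bc hbc_meas hbc_bdd hb0 b hb_approx
  have hbε : ∀ ε : ℝ, Measurable (fun x => b x ε) :=
    fun ε => hb_meas.comp (measurable_id.prodMk measurable_const)
  -- the canonical form of the inner integral
  set T : ℕ → N → ℝ → ℝ := fun j x ε =>
    if j = k then v k x * Real.log (b x ε)
    else (v j x / (-((k-j : ℕ):ℝ))) * ((ε⁻¹)^(k-j) * ((b x ε)⁻¹)^(k-j) - (ε⁻¹)^(k-j))
    with hT
  set G : N → ℝ → ℝ := fun x ε => ∑ j ∈ Finset.range (k+1), (if Even j then T j x ε else 0)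
    with hG
  -- inner integral evaluation
  have hinner : ∀ x, ∀ ε ∈ Ioo (0:ℝ) εb,
      (∫ r in ε..(ε * b x ε), ∑ j ∈ Finset.range (k + 1),
        (if Even j then v j x * r ^ ((j : ℤ) - (k : ℤ) - 1) else 0)) = G x ε := by
    intro x ε hε
    have hbp : 0 < b x ε := lt_of_lt_of_le (by positivity) (hbnd x ε hε).1
    have hεpos : 0 < ε := hε.1
    have hεbp : 0 < ε * b x ε := mul_pos hεpos hbp
    have huIcc : (0:ℝ) ∉ uIcc ε (ε * b x ε) := by
      rw [Set.mem_uIcc]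
      rintro (⟨h1, -⟩ | ⟨h1, -⟩) <;> linarith
    have hinteg : ∀ j ∈ Finset.range (k+1), IntervalIntegrable
        (fun r => if Even j then v j x * r ^ ((j:ℤ) - (k:ℤ) - 1) else 0) volume ε (ε * b x ε) := by
      intro j _
      by_cases hj : Even j
      · simp only [if_pos hj]
        exact (intervalIntegral.intervalIntegrable_zpow (Or.inr huIcc)).const_mul _
      · simp only [if_neg hj]
        exact intervalIntegrable_const
    rw [intervalIntegral.integral_finset_sum hinteg, hG]
    refine Finset.sum_congr rfl fun j hj => ?_
    rw [Finset.mem_range] at hj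
    by_cases hje : Even j
    · have hieq : (fun r : ℝ => if Even j then v j x * r ^ ((j:ℤ) - (k:ℤ) - 1) else 0)
          = fun r : ℝ => v j x * r ^ ((j:ℤ) - (k:ℤ) - 1) := by
        funext r; rw [if_pos hje]
      rw [hieq, if_pos hje, intervalIntegral.integral_const_mul]
      by_cases hjk : j = k
      · subst hjk
        simp only [hT, if_pos rfl]
        have h1 : ((j:ℤ) - (j:ℤ) - 1) = -1 := by ring
        rw [h1]
        congr 1
        have h2 : (fun r : ℝ => r ^ (-1:ℤ)) = (fun r : ℝ => r⁻¹) := by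
          funext r; exact zpow_neg_one r
        rw [intervalIntegral.integral_congr (fun r _ => congrFun h2 r), integral_inv huIcc,
          mul_comm ε (b x ε), mul_div_assoc, div_self (ne_of_gt hεpos), mul_one]
      · simp only [hT, if_neg hjk]
        have hlt : j < k := by omega
        have hne1 : (j:ℤ) - (k:ℤ) - 1 ≠ -1 := by
          have : (j:ℤ) ≠ (k:ℤ) := by exact_mod_cast hjk
          omega
        rw [integral_zpow (Or.inr ⟨hne1, huIcc⟩)]
        have he1 : (j:ℤ) - (k:ℤ) - 1 + 1 = -((k-j : ℕ) : ℤ) := by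
          push_cast [Nat.cast_sub (le_of_lt hlt)]; ring
        rw [he1]
        have he2 : ∀ y : ℝ, y ^ (-((k-j:ℕ):ℤ)) = (y⁻¹)^(k-j) := by
          intro y; rw [zpow_neg, zpow_natCast, inv_pow]
        rw [he2 (ε * b x ε), he2 ε, mul_inv, mul_pow]
        have hden : (((j:ℤ) - (k:ℤ) - 1 : ℤ) : ℝ) + 1 = -((k-j : ℕ) : ℝ) := by
          push_cast [Nat.cast_sub (le_of_lt hlt)]; ring
        rw [hden]
        ring
    · have hieq : (fun r : ℝ => if Even j then v j x * r ^ ((j:ℤ) - (k:ℤ) - 1) else 0)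
          = fun _ : ℝ => (0:ℝ) := by
        funext r; rw [if_neg hje]
      rw [hieq, if_neg hje]
      simp
  -- each block decomposes
  have hdecomp : Decomp k G := by
    rw [hG]
    refine decomp_sum (Finset.range (k+1)) _ fun j hj => ?_
    rw [Finset.mem_range] at hj
    by_cases hje : Even j
    · by_cases hjk : j = k
      · -- logarithmic block
        obtain ⟨M, hM⟩ := hv_bdd k hk_even' le_rfl
        set Mv : ℝ := max M 0 with hMv
        have hMvb : ∀ x, |v k x| ≤ Mv := fun x => (hM x).trans (le_max_left _ _)
        set A : ℝ := |Real.log (c₀/2)| + |Real.log Mb| with hA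
        have heq : (fun x ε => if Even j then T j x ε else 0)
            = fun x ε => v k x * Real.log (b x ε) := by
          funext x ε; rw [if_pos hje]; simp only [hT]; rw [if_pos hjk]
        rw [heq]
        refine decomp_of_tendsto k _ (fun x => v k x * Real.log (bc 0 x)) εb (Mv * A)
          hεbpos hεb1 ?_ ?_ ?_ ?_
        · intro ε hε
          exact (hv_meas k hk_even' le_rfl).mul (Real.measurable_log.comp (hbε ε))
        · exact (hv_meas k hk_even' le_rfl).mul
            (Real.measurable_log.comp (hbc_meas 0 Even.zero (by omega)))
        · intro x ε hε
          rw [abs_mul]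
          refine mul_le_mul (hMvb x) ?_ (abs_nonneg _) (le_max_right _ _)
          have hb1 : c₀/2 ≤ b x ε := (hbnd x ε hε).1
          have hb2 : b x ε ≤ Mb := (hbnd x ε hε).2
          have l1 : Real.log (c₀/2) ≤ Real.log (b x ε) := Real.log_le_log (by positivity) hb1
          have l2 : Real.log (b x ε) ≤ Real.log Mb :=
            Real.log_le_log (lt_of_lt_of_le (by positivity) hb1) hb2
          rw [abs_le]
          constructor
          · have := neg_abs_le (Real.log (c₀/2))
            have := abs_nonneg (Real.log Mb)
            rw [hA]; linarith
          · have := le_abs_self (Real.log Mb)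
            have := abs_nonneg (Real.log (c₀/2))
            rw [hA]; linarith
        · intro x
          have hcont : ContinuousAt Real.log (bc 0 x) :=
            Real.continuousAt_log (ne_of_gt (lt_of_lt_of_le hc₀ (hb0 x)))
          exact Tendsto.const_mul (v k x) (hcont.tendsto.comp (htendb x))
      · -- power block
        have hlt : j < k := by omega
        obtain ⟨M, hM⟩ := hv_bdd j hje (le_of_lt hlt)
        set Mv : ℝ := max M 0 with hMv
        have hMvb : ∀ x, |v j x| ≤ Mv := fun x => (hM x).trans (le_max_left _ _)
        obtain ⟨aj, haj⟩ := hje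
        have hje : Even j := ⟨aj, haj⟩
        have hn2 : 2 ≤ k - j := by omega
        have heq : (fun x ε => if Even j then T j x ε else 0)
            = fun x ε => (v j x / (-((k-j : ℕ):ℝ)))
                * ((ε⁻¹)^(k-j) * ((fun x ε => ((b x ε)⁻¹)^(k-j)) x ε) - (ε⁻¹)^(k-j)) := by
          funext x ε; rw [if_pos hje]; simp only [hT, if_neg hjk]
        rw [heq]
        exact decomp_block k K (k-j) hkK hn2 (Nat.sub_le k j) ⟨K - aj, by omega⟩ (v j)
          (hv_meas j hje (le_of_lt hlt)) Mv (le_max_right _ _) hMvb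
          (fun x ε => ((b x ε)⁻¹)^(k-j)) (hExpbinv.pow (k-j))
          (fun ε => ((hbε ε).inv).pow_const (k-j))
    · have heq : (fun x ε => if Even j then T j x ε else 0) = fun (_ : N) (_ : ℝ) => (0:ℝ) := by
        funext x ε; rw [if_neg hje]
      rw [heq]
      exact decomp_zero k
  obtain ⟨a, c, htend⟩ := decomp_integrate ν k G hdecomp
  refine ⟨a, c, Tendsto.congr' ?_ htend⟩
  filter_upwards [Ioo_mem_nhdsGT_of_mem ⟨le_refl (0:ℝ), hεbpos⟩] with ε hε
  have hfun : (fun x => ∫ r in ε..(ε * b x ε), ∑ j ∈ Finset.range (k + 1),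
      (if Even j then v j x * r ^ ((j : ℤ) - (k : ℤ) - 1) else 0)) = fun x => G x ε :=
    funext fun x => hinner x ε hε
  rw [hfun]
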